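/- arXiv:1602.02289 — 3 statements merged into one kernel-verified Lean document; each statement's English description precedes it below -/
import Mathlib

section
/- For any coloring φ of the pairs of [n] with two colors (red/green), the 3-uniform hypergraph H_φ on vertex set [n], whose hyperedges are the triples {i,j,k} with i<j<k such that the colors of {i,j} and {i,k} differ, contains no copy of K_4^{(3)} (i.e., no four vertices spanning all four triples as hyperedges). -/
set_option maxHeartbeats 1600000 in
/-- For any 2-coloring of the pairs of [n], the hypergraph whose
hyperedges are triples {i,j,k} with i<j<k such that φ(i,j) ≠ φ(i,k) contains no
tetrahedron K₄⁽³⁾. -/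
theorem stmt_0 (n : ℕ) (φ : Fin n → Fin n → Bool) (hsym : ∀ i j, φ i j = φ j i)
    (isEdge : Finset (Fin n) → Prop)
    (hEdge : ∀ S, isEdge S ↔
      ∃ i j k : Fin n, i < j ∧ j < k ∧ S = {i, j, k} ∧ φ i j ≠ φ i k) :
    ∀ a b c d : Fin n, ({a, b, c, d} : Finset (Fin n)).card = 4 →
      ¬ (isEdge {a, b, c} ∧ isEdge {a, b, d} ∧ isEdge {a, c, d} ∧ isEdge {b, c, d}) := by
  intro a b c d hcard h
  obtain ⟨e1, e2, e3, e4⟩ := h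
  -- extraction for sorted triples
  have ext3 : ∀ w x y : Fin n, w < x → x < y → isEdge {w, x, y} → φ w x ≠ φ w y := by
    intro w x y hwx hxy he
    obtain ⟨i, j, k, hij, hjk, hS, hne⟩ := (hEdge _).mp he
    have hw : w ∈ ({i, j, k} : Finset (Fin n)) := by rw [← hS]; simp
    have hx : x ∈ ({i, j, k} : Finset (Fin n)) := by rw [← hS]; simp
    have hy : y ∈ ({i, j, k} : Finset (Fin n)) := by rw [← hS]; simp
    simp only [Finset.mem_insert, Finset.mem_singleton] at hw hx hy
    simp only [Fin.lt_def] at hij hjk hwx hxy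
    rcases hw with rfl | rfl | rfl <;> rcases hx with rfl | rfl | rfl <;>
      rcases hy with rfl | rfl | rfl <;> first | exact hne | omega
  -- extraction with only "w is the minimum" known
  have key3 : ∀ w x y : Fin n, w < x → w < y → isEdge {w, x, y} → φ w x ≠ φ w y := by
    intro w x y hwx hwy he
    rcases lt_trichotomy x y with h | rfl | h
    · exact ext3 w x y hwx h he
    · exfalso
      obtain ⟨i, j, k, hij, hjk, hS, hne⟩ := (hEdge _).mp he
      have hi : i ∈ ({w, x, x} : Finset (Fin n)) := by rw [hS]; simp
      have hj : j ∈ ({w, x, x} : Finset (Fin n)) := by rw [hS]; simp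
      have hk : k ∈ ({w, x, x} : Finset (Fin n)) := by rw [hS]; simp
      simp only [Finset.mem_insert, Finset.mem_singleton, or_self] at hi hj hk
      simp only [Fin.lt_def] at hij hjk
      rcases hi with rfl | rfl <;> rcases hj with rfl | rfl <;>
        rcases hk with rfl | rfl <;> omega
    · rw [Finset.pair_comm x y] at he
      exact (ext3 w y x hwy h he).symm
  -- three triples containing the minimum yield a contradiction
  have fin3 : ∀ m x y z : Fin n, m < x → m < y → m < z →
      isEdge {m, x, y} → isEdge {m, x, z} → isEdge {m, y, z} → False := by
    intro m x y z h1 h2 h3 f1 f2 f3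
    have g1 := key3 m x y h1 h2 f1
    have g2 := key3 m x z h1 h3 f2
    have g3 := key3 m y z h2 h3 f3
    revert g1 g2 g3
    cases φ m x <;> cases φ m y <;> cases φ m z <;> simp
  have conv : ∀ {S T : Finset (Fin n)}, S = T → isEdge T → isEdge S :=
    fun h e => h ▸ e
  -- pairwise distinctness from the cardinality hypothesis
  have hne : ∀ x y z : Fin n, ({x, y, z} : Finset (Fin n)).card ≤ 3 := by
    intro x y z
    have h1 := Finset.card_insert_le x ({y, z} : Finset (Fin n))
    have h2 := Finset.card_insert_le y ({z} : Finset (Fin n))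
    have h3 : ({z} : Finset (Fin n)).card = 1 := Finset.card_singleton z
    omega
  have hab : a ≠ b := by
    rintro rfl
    have hsub : ({a, a, c, d} : Finset (Fin n)) ⊆ {a, c, d} := by intro t; simp; try tauto
    have := Finset.card_le_card hsub; have := hne a c d; omega
  have hcd : c ≠ d := by
    rintro rfl
    have hsub : ({a, b, c, c} : Finset (Fin n)) ⊆ {a, b, c} := by intro t; simp; try tauto
    have := Finset.card_le_card hsub; have := hne a b c; omega
  have hac : a ≠ c := by
    rintro rfl
    have hsub : ({a, b, a, d} : Finset (Fin n)) ⊆ {a, b, d} := by intro t; simp; try tauto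
    have := Finset.card_le_card hsub; have := hne a b d; omega
  have had : a ≠ d := by
    rintro rfl
    have hsub : ({a, b, c, a} : Finset (Fin n)) ⊆ {a, b, c} := by intro t; simp; try tauto
    have := Finset.card_le_card hsub; have := hne a b c; omega
  have hbc : b ≠ c := by
    rintro rfl
    have hsub : ({a, b, b, d} : Finset (Fin n)) ⊆ {a, b, d} := by intro t; simp; try tauto
    have := Finset.card_le_card hsub; have := hne a b d; omega
  have hbd : b ≠ d := by
    rintro rfl
    have hsub : ({a, b, c, b} : Finset (Fin n)) ⊆ {a, b, c} := by intro t; simp; try tauto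
    have := Finset.card_le_card hsub; have := hne a b c; omega
  -- find the minimum of {a,b,c,d} by a tournament and conclude
  rcases hab.lt_or_gt with h1 | h1 <;> rcases hcd.lt_or_gt with h2 | h2
  · rcases hac.lt_or_gt with h3 | h3
    · exact fin3 a b c d h1 h3 (h3.trans h2) e1 e2 e3
    · exact fin3 c a b d h3 (h3.trans h1) h2
        (conv (by ext t; simp; try tauto) e1) (conv (by ext t; simp; try tauto) e3)
        (conv (by ext t; simp; try tauto) e4)
  · rcases had.lt_or_gt with h3 | h3
    · exact fin3 a b c d h1 (h3.trans h2) h3 e1 e2 e3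
    · exact fin3 d a b c h3 (h3.trans h1) h2
        (conv (by ext t; simp; try tauto) e2) (conv (by ext t; simp; try tauto) e3)
        (conv (by ext t; simp; try tauto) e4)
  · rcases hbc.lt_or_gt with h3 | h3
    · exact fin3 b a c d h1 h3 (h3.trans h2)
        (conv (by ext t; simp; try tauto) e1) (conv (by ext t; simp; try tauto) e2) e4
    · exact fin3 c a b d (h3.trans h1) h3 h2
        (conv (by ext t; simp; try tauto) e1) (conv (by ext t; simp; try tauto) e3)
        (conv (by ext t; simp; try tauto) e4)
  · rcases hbd.lt_or_gt with h3 | h3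
    · exact fin3 b a c d h1 (h3.trans h2) h3
        (conv (by ext t; simp; try tauto) e1) (conv (by ext t; simp; try tauto) e2) e4
    · exact fin3 d a b c (h3.trans h1) h3 h2
        (conv (by ext t; simp; try tauto) e2) (conv (by ext t; simp; try tauto) e3)
        (conv (by ext t; simp; try tauto) e4)
end

section
/- If a 3-uniform hypergraph H on n vertices is (d,η,▭▭)-quasirandom (pair–pair quasirandom), then it is (d,η,▭•)-quasirandom (pair–vertex quasirandom). -/
open Finset

/-- (d,η,▭▭)-quasirandom implies (d,η,▭•)-quasirandom. -/
theorem stmt_1 {V : Type*} [Fintype V] [DecidableEq V] (E : Finset (Finset V)) (d η : ℝ)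
    (hPP : ∀ P Q : Finset (V × V),
      |((((P ×ˢ Q).filter (fun t =>
            t.1.1 = t.2.1 ∧ ({t.1.1, t.1.2, t.2.2} : Finset V) ∈ E)).card : ℝ)
        - d * (((P ×ˢ Q).filter (fun t => t.1.1 = t.2.1)).card : ℝ))|
        ≤ η * (Fintype.card V : ℝ) ^ 3) :
    ∀ (X : Finset V) (P : Finset (V × V)),
      |(((X ×ˢ P).filter (fun t => ({t.1, t.2.1, t.2.2} : Finset V) ∈ E)).card : ℝ)
        - d * (X.card : ℝ) * (P.card : ℝ)| ≤ η * (Fintype.card V : ℝ) ^ 3 := by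
  intro X P
  have h := hPP (Finset.univ ×ˢ X) P
  have h1 : (((Finset.univ ×ˢ X) ×ˢ P).filter (fun t =>
        t.1.1 = t.2.1 ∧ ({t.1.1, t.1.2, t.2.2} : Finset V) ∈ E)).card
      = ((X ×ˢ P).filter (fun t => ({t.1, t.2.1, t.2.2} : Finset V) ∈ E)).card := by
    apply Finset.card_bij (fun t _ => (t.1.2, t.2))
    · intro t ht
      simp only [mem_filter, mem_product, mem_univ, true_and] at ht ⊢
      obtain ⟨⟨hx, hp⟩, heq, he⟩ := ht
      refine ⟨⟨hx, hp⟩, ?_⟩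
      rw [Finset.insert_comm, heq] at he
      exact he
    · intro a ha b hb hab
      simp only [mem_filter, mem_product, mem_univ, true_and] at ha hb
      obtain ⟨-, heqa, -⟩ := ha
      obtain ⟨-, heqb, -⟩ := hb
      injection hab with h2a h2b
      have : a.1.1 = b.1.1 := by rw [heqa, heqb, h2b]
      exact Prod.ext (Prod.ext this h2a) h2b
    · intro b hb
      simp only [mem_filter, mem_product] at hb
      obtain ⟨⟨hx, hp⟩, he⟩ := hb
      refine ⟨((b.2.1, b.1), b.2), ?_, rfl⟩
      rw [mem_filter, mem_product, mem_product]
      exact ⟨⟨⟨mem_univ _, hx⟩, hp⟩, rfl, by rwa [Finset.insert_comm]⟩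
  have h2 : (((Finset.univ ×ˢ X) ×ˢ P).filter (fun t => t.1.1 = t.2.1)).card
      = X.card * P.card := by
    rw [← Finset.card_product]
    apply Finset.card_bij (fun t _ => (t.1.2, t.2))
    · intro t ht
      simp only [mem_filter, mem_product, mem_univ, true_and] at ht ⊢
      exact ht.1
    · intro a ha b hb hab
      simp only [mem_filter, mem_product, mem_univ, true_and] at ha hb
      obtain ⟨-, heqa⟩ := ha
      obtain ⟨-, heqb⟩ := hb
      injection hab with h2a h2b
      have : a.1.1 = b.1.1 := by rw [heqa, heqb, h2b]
      exact Prod.ext (Prod.ext this h2a) h2b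
    · intro b hb
      simp only [mem_product] at hb
      refine ⟨((b.2.1, b.1), b.2), ?_, rfl⟩
      rw [mem_filter, mem_product, mem_product]
      exact ⟨⟨⟨mem_univ _, hb.1⟩, hb.2⟩, rfl⟩
  rw [h1, h2] at h
  push_cast at h
  rw [← mul_assoc] at h
  exact h
end

section
/- Let A be a tripartite 3-uniform hypergraph with finite vertex classes P¹², P¹⁴, P²⁴, each hyperedge meeting every class once. Fix a vertex Q ∈ P²⁴ and subsets J¹² ⊆ P¹², J¹⁴ ⊆ P¹⁴ such that J¹²∪J¹⁴∪{Q} together with a set J²⁴ ∋ Q spans no hyperedge with one vertex in each of J¹², J¹⁴, J²⁴ (in particular no hyperedge uses Q, a vertex of J¹⁴, and a vertex of J¹²). Suppose also X ⊆ P¹⁴ with |X| ≤ δ|P¹⁴|, and for every R ∈ P¹⁴ ∖ (J¹⁴ ∪ X) the codegree codeg(R,Q) is at most (p+1)δ|P¹²|, where |J¹²| ≥ pδ|P¹²|. Then the degree of Q satisfies deg(Q) ≤ |J¹⁴|(1 − pδ)|P¹²| + |X||P¹²| + (|P¹⁴| − |J¹⁴|)(p+1)δ|P¹²|. -/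
open Finset

/-- bound on the degree of Q obtained by splitting the codegree
sum over J¹⁴, X, and the remaining vertices of P¹⁴. -/
theorem stmt_13 {V : Type*} [DecidableEq V] (P12 P14 P24 : Finset V)
    (A : V → V → V → Bool) (Q : V) (hQ : Q ∈ P24)
    (J12 J14 X : Finset V) (hJ12 : J12 ⊆ P12) (hJ14 : J14 ⊆ P14) (hX : X ⊆ P14)
    (δ : ℝ) (p : ℕ) (hδ : 0 < δ)
    (hind : ∀ S ∈ J12, ∀ R ∈ J14, ¬ (A S R Q = true))
    (hXcard : (X.card : ℝ) ≤ δ * P14.card)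
    (hcod : ∀ R ∈ P14 \ (J14 ∪ X),
      ((P12.filter (fun S => A S R Q = true)).card : ℝ) ≤ ((p : ℝ) + 1) * δ * P12.card)
    (hJ12card : (J12.card : ℝ) ≥ (p : ℝ) * δ * P12.card) :
    (∑ R ∈ P14, ((P12.filter (fun S => A S R Q = true)).card : ℝ))
      ≤ (J14.card : ℝ) * (1 - (p : ℝ) * δ) * P12.card
        + (X.card : ℝ) * P12.card
        + ((P14.card : ℝ) - J14.card) * ((p : ℝ) + 1) * δ * P12.card := by
  classical
  have hsplit1 : ∑ R ∈ P14, ((P12.filter (fun S => A S R Q = true)).card : ℝ)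
      = ∑ R ∈ J14, ((P12.filter (fun S => A S R Q = true)).card : ℝ)
        + ∑ R ∈ P14 \ J14, ((P12.filter (fun S => A S R Q = true)).card : ℝ) := by
    rw [← Finset.sum_sdiff hJ14]; ring
  have hsplit2 : ∑ R ∈ P14 \ J14, ((P12.filter (fun S => A S R Q = true)).card : ℝ)
      = ∑ R ∈ (P14 \ J14) ∩ X, ((P12.filter (fun S => A S R Q = true)).card : ℝ)
        + ∑ R ∈ (P14 \ J14) \ X, ((P12.filter (fun S => A S R Q = true)).card : ℝ) := by
    rw [← Finset.sum_sdiff (Finset.inter_subset_left (s₂ := X)),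
      Finset.sdiff_inter_self_left]; ring
  -- bound on J14 part
  have h1 : ∑ R ∈ J14, ((P12.filter (fun S => A S R Q = true)).card : ℝ)
      ≤ (J14.card : ℝ) * ((1 - (p : ℝ) * δ) * P12.card) := by
    have : ∀ R ∈ J14, ((P12.filter (fun S => A S R Q = true)).card : ℝ)
        ≤ (1 - (p : ℝ) * δ) * P12.card := by
      intro R hR
      have hsub : P12.filter (fun S => A S R Q = true) ⊆ P12 \ J12 := by
        intro S hS
        simp only [mem_filter] at hS
        refine Finset.mem_sdiff.2 ⟨hS.1, fun hSJ => hind S hSJ R hR hS.2⟩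
      calc ((P12.filter (fun S => A S R Q = true)).card : ℝ)
          ≤ ((P12 \ J12).card : ℝ) := by exact_mod_cast Finset.card_le_card hsub
        _ = (P12.card : ℝ) - J12.card := by
            rw [Finset.card_sdiff_of_subset hJ12]
            exact_mod_cast Nat.cast_sub (Finset.card_le_card hJ12)
        _ ≤ (1 - (p : ℝ) * δ) * P12.card := by nlinarith [hJ12card]
    calc ∑ R ∈ J14, ((P12.filter (fun S => A S R Q = true)).card : ℝ)
        ≤ ∑ _R ∈ J14, (1 - (p : ℝ) * δ) * P12.card := Finset.sum_le_sum this
      _ = (J14.card : ℝ) * ((1 - (p : ℝ) * δ) * P12.card) := by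
          rw [Finset.sum_const, nsmul_eq_mul]
  -- bound on X part
  have h2 : ∑ R ∈ (P14 \ J14) ∩ X, ((P12.filter (fun S => A S R Q = true)).card : ℝ)
      ≤ (X.card : ℝ) * P12.card := by
    calc ∑ R ∈ (P14 \ J14) ∩ X, ((P12.filter (fun S => A S R Q = true)).card : ℝ)
        ≤ ∑ _R ∈ (P14 \ J14) ∩ X, (P12.card : ℝ) := by
          refine Finset.sum_le_sum fun R _ => ?_
          exact_mod_cast Finset.card_le_card (Finset.filter_subset _ _)
      _ = (((P14 \ J14) ∩ X).card : ℝ) * P12.card := by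
          rw [Finset.sum_const, nsmul_eq_mul]
      _ ≤ (X.card : ℝ) * P12.card := by
          have := Finset.card_le_card (Finset.inter_subset_right (s₁ := P14 \ J14) (s₂ := X))
          have h0 : (0:ℝ) ≤ (P12.card : ℝ) := Nat.cast_nonneg _
          exact mul_le_mul_of_nonneg_right (by exact_mod_cast this) h0
  -- bound on remaining part
  have h3 : ∑ R ∈ (P14 \ J14) \ X, ((P12.filter (fun S => A S R Q = true)).card : ℝ)
      ≤ ((P14.card : ℝ) - J14.card) * (((p : ℝ) + 1) * δ * P12.card) := by
    have hset : (P14 \ J14) \ X = P14 \ (J14 ∪ X) := by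
      ext a; simp only [Finset.mem_sdiff, Finset.mem_union]; tauto
    calc ∑ R ∈ (P14 \ J14) \ X, ((P12.filter (fun S => A S R Q = true)).card : ℝ)
        ≤ ∑ _R ∈ (P14 \ J14) \ X, ((p : ℝ) + 1) * δ * P12.card := by
          refine Finset.sum_le_sum fun R hR => ?_
          exact hcod R (hset ▸ hR)
      _ = (((P14 \ J14) \ X).card : ℝ) * (((p : ℝ) + 1) * δ * P12.card) := by
          rw [Finset.sum_const, nsmul_eq_mul]
      _ ≤ ((P14.card : ℝ) - J14.card) * (((p : ℝ) + 1) * δ * P12.card) := by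
          have hsub : (P14 \ J14) \ X ⊆ P14 \ J14 := Finset.sdiff_subset
          have hc : (((P14 \ J14) \ X).card : ℝ) ≤ (P14.card : ℝ) - J14.card := by
            have := Finset.card_le_card hsub
            rw [Finset.card_sdiff_of_subset hJ14] at this
            have h2 := Finset.card_le_card hJ14
            have hcast : ((P14.card - J14.card : ℕ) : ℝ) = (P14.card : ℝ) - J14.card :=
              Nat.cast_sub h2
            calc (((P14 \ J14) \ X).card : ℝ) ≤ ((P14.card - J14.card : ℕ) : ℝ) := by
                  exact_mod_cast this
              _ = (P14.card : ℝ) - J14.card := hcast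
          have hpos : (0:ℝ) ≤ ((p : ℝ) + 1) * δ * P12.card := by positivity
          exact mul_le_mul_of_nonneg_right hc hpos
  rw [hsplit1, hsplit2]
  nlinarith [h1, h2, h3]
end
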